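/- Let K be a field of characteristic zero, let n ≥ 1, let μ : Fin n → ℕ be a multiindex, let κ be a natural number, and let p ∈ K^n. Suppose P is a polynomial in n variables over K such that the degree of P in the i-th variable is at most μ_i for every i, and the total degree of P is at most κ. If for every multiindex δ : Fin n → ℕ with δ_i ≤ μ_i for all i and Σ_i δ_i ≤ κ, the iterated partial derivative ∂^δ P vanishes at the point p, then P = 0. -/

import Mathlib

/-- The iterated partial derivative `∂^δ P` of a multivariate polynomial:
differentiate `δ i` times with respect to the `i`-th variable, for each `i`. -/
noncomputable def iterPderiv {K : Type*} [CommSemiring K] {n : ℕ} (δ : Fin n → ℕ)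
    (P : MvPolynomial (Fin n) K) : MvPolynomial (Fin n) K :=
  (List.finRange n).foldl (fun Q i => (fun R => MvPolynomial.pderiv i R)^[δ i] Q) P

open MvPolynomial Finsupp in
lemma coeff_pderiv' {K : Type*} [CommSemiring K] {n : ℕ} (i : Fin n)
    (m : Fin n →₀ ℕ) (P : MvPolynomial (Fin n) K) :
    coeff m (pderiv i P) = (m i + 1) * coeff (m + single i 1) P := by
  induction P using MvPolynomial.induction_on' with
  | monomial s a =>
    rw [pderiv_monomial, coeff_monomial, coeff_monomial]
    rcases Nat.eq_zero_or_pos (s i) with hs | hs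
    · have hne : s ≠ m + single i 1 := by
        intro h
        have := congrArg (fun f => f i) h
        simp [hs] at this
      rw [if_neg hne]
      split_ifs with h
      · simp [hs]
      · ring
    · have hiff : s - single i 1 = m ↔ s = m + single i 1 := by
        constructor
        · intro h
          ext j
          rcases eq_or_ne j i with rfl | hj
          · have := congrArg (fun f => f j) h
            simp [Finsupp.single_apply] at this ⊢
            omega
          · have := congrArg (fun f => f j) h
            simp [Finsupp.single_apply, hj, Ne.symm hj] at this ⊢
            omega
        · intro h
          subst h
          ext j
          rcases eq_or_ne j i with rfl | hj
          · simp [Finsupp.single_apply]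
          · simp [Finsupp.single_apply, hj, Ne.symm hj]
      split_ifs with h1 h2 h2
      · have : s i = m i + 1 := by
          have := congrArg (fun f => f i) h2
          simpa using this
        rw [this]; push_cast; ring
      · exact absurd (hiff.mp h1) h2
      · exact absurd (hiff.mpr h2) h1
      · ring
  | add p q hp hq =>
    simp only [map_add, coeff_add, hp, hq]; ring

open MvPolynomial Finsupp in
lemma coeff_pderiv_iterate {K : Type*} [CommSemiring K] {n : ℕ} (i : Fin n) (k : ℕ)
    (m : Fin n →₀ ℕ) (P : MvPolynomial (Fin n) K) :
    coeff m ((fun R => pderiv i R)^[k] P)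
      = (m i + k).descFactorial k * coeff (m + single i k) P := by
  induction k generalizing m with
  | zero => simp
  | succ k ih =>
    rw [Function.iterate_succ_apply', coeff_pderiv', ih]
    have h1 : (m + single i 1 : Fin n →₀ ℕ) i = m i + 1 := by
      rw [Finsupp.add_apply, Finsupp.single_apply, if_pos rfl]
    have h2 : m + single i 1 + single i k = m + single i (k + 1) := by
      rw [add_assoc, ← Finsupp.single_add, add_comm 1 k]
    rw [h1, h2]
    have : (m i + (k + 1)).descFactorial (k + 1) = (m i + 1) * ((m i + 1 + k).descFactorial k) := by
      rw [show m i + (k + 1) = m i + 1 + k from by omega, Nat.descFactorial_succ,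
        Nat.add_sub_cancel]
    rw [this, Nat.cast_mul]
    push_cast
    ring

open MvPolynomial Finsupp in
lemma coeff_foldl_pderiv {K : Type*} [CommSemiring K] {n : ℕ} (δ : Fin n → ℕ)
    (L : List (Fin n)) (hL : L.Nodup)
    (m : Fin n →₀ ℕ) (P : MvPolynomial (Fin n) K) :
    coeff m (L.foldl (fun Q i => (fun R => MvPolynomial.pderiv i R)^[δ i] Q) P)
      = (∏ i ∈ L.toFinset, ((m i + δ i).descFactorial (δ i) : K)) *
          coeff (m + ∑ i ∈ L.toFinset, single i (δ i)) P := by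
  induction L generalizing P with
  | nil => simp
  | cons i L ih =>
    have hiL : i ∉ L := (List.nodup_cons.mp hL).1
    have hLnd : L.Nodup := (List.nodup_cons.mp hL).2
    rw [List.foldl_cons, ih hLnd, coeff_pderiv_iterate]
    have hins : (i :: L).toFinset = insert i L.toFinset := by simp
    have hiT : i ∉ L.toFinset := by simpa using hiL
    have hS : (m + ∑ j ∈ L.toFinset, single j (δ j)) i = m i := by
      rw [Finsupp.add_apply]
      have : (∑ j ∈ L.toFinset, single j (δ j)) i = 0 := by
        rw [Finsupp.finset_sum_apply]
        apply Finset.sum_eq_zero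
        intro j hj
        rw [Finsupp.single_apply, if_neg]
        intro h; exact hiT (h ▸ hj)
      rw [this, add_zero]
    rw [hS, hins, Finset.prod_insert hiT, Finset.sum_insert hiT]
    ring_nf
    congr 2
    abel

open MvPolynomial Finsupp in
lemma coeff_iterPderiv {K : Type*} [CommSemiring K] {n : ℕ} (δ : Fin n → ℕ)
    (m : Fin n →₀ ℕ) (P : MvPolynomial (Fin n) K) :
    coeff m (iterPderiv δ P)
      = (∏ i, ((m i + δ i).descFactorial (δ i) : K)) *
          coeff (m + equivFunOnFinite.symm δ) P := by
  rw [iterPderiv, coeff_foldl_pderiv δ _ (List.nodup_finRange n)]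
  have h1 : (List.finRange n).toFinset = Finset.univ := by
    ext j; simp [List.mem_finRange]
  rw [h1]
  congr 2
  ext j
  simp only [Finsupp.add_apply, Finsupp.finset_sum_apply, Finsupp.single_apply,
    Finsupp.coe_equivFunOnFinite_symm]
  rw [Finset.sum_ite_eq' Finset.univ j δ, if_pos (Finset.mem_univ j)]

/-- Let `K` be a field of characteristic zero, `μ` a multiindex, `κ : ℕ`, `p ∈ K^n`.
If `P` has degree at most `μ i` in the `i`-th variable and total degree at most `κ`,
and all iterated partial derivatives `∂^δ P` with `δ ≤ μ` and `|δ| ≤ κ` vanish at `p`,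
then `P = 0`. -/
theorem mvpolynomial_eq_zero_of_derivs_vanish {K : Type*} [Field K] [CharZero K]
    (n : ℕ) (hn : 1 ≤ n) (μ : Fin n → ℕ) (κ : ℕ) (p : Fin n → K)
    (P : MvPolynomial (Fin n) K)
    (hdeg : ∀ i : Fin n, P.degreeOf i ≤ μ i)
    (htot : P.totalDegree ≤ κ)
    (hvanish : ∀ δ : Fin n → ℕ, (∀ i, δ i ≤ μ i) → (∑ i, δ i) ≤ κ →
      MvPolynomial.eval p (iterPderiv δ P) = 0) :
    P = 0 := by
  classical
  by_contra hP
  have hsupp : P.support.Nonempty := MvPolynomial.support_nonempty.mpr hP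
  obtain ⟨d, hd, hdmax⟩ := P.support.exists_maximal hsupp
  set δ : Fin n → ℕ := fun i => d i with hδ
  have hδμ : ∀ i, δ i ≤ μ i := fun i =>
    le_trans (MvPolynomial.monomial_le_degreeOf i hd) (hdeg i)
  have hδκ : (∑ i, δ i) ≤ κ := by
    refine le_trans ?_ (le_trans (MvPolynomial.le_totalDegree hd) htot)
    rw [Finsupp.sum]
    rw [← Finset.sum_subset (Finset.subset_univ d.support)]
    intro i _ hi
    simpa using hi
  have hd' : Finsupp.equivFunOnFinite.symm δ = d := by
    ext j; simp [hδ]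
  -- iterPderiv δ P is the constant (∏ i, (δ i)!) * coeff d P
  have hconst : iterPderiv δ P =
      MvPolynomial.C ((∏ i, ((δ i).factorial : K)) * MvPolynomial.coeff d P) := by
    apply MvPolynomial.ext
    intro m
    rw [coeff_iterPderiv, hd', MvPolynomial.coeff_C]
    rcases eq_or_ne m 0 with rfl | hm
    · simp [Nat.descFactorial_self]
    · rw [if_neg (Ne.symm hm)]
      have hlt : d < m + d := by
        constructor
        · exact le_add_self
        · intro hle
          apply hm
          ext j
          have := hle j
          simp only [Finsupp.add_apply] at this
          simp only [Finsupp.coe_zero, Pi.zero_apply]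
          omega
      have : MvPolynomial.coeff (m + d) P = 0 := by
        by_contra hc
        exact absurd (hdmax (MvPolynomial.mem_support_iff.mpr hc) hlt.le) (not_le_of_gt hlt)
      rw [this, mul_zero]
  have := hvanish δ hδμ hδκ
  rw [hconst, MvPolynomial.eval_C] at this
  rcases mul_eq_zero.mp this with h | h
  · obtain ⟨i, _, hi⟩ := Finset.prod_eq_zero_iff.mp h
    exact Nat.cast_ne_zero.mpr (Nat.factorial_ne_zero (δ i)) hi
  · exact (MvPolynomial.mem_support_iff.mp hd) h
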